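/- Let G be an undirected connected graph on nodes 1,…,N, let f, B, C satisfy the Assumption (OFP), and let xᵢ, kᵢⱼ be a continuously differentiable solution of the adaptively coupled system on [0,∞) with xᵢ(t) ∈ X for all t ≥ 0. Then for every pair i,j adjacent in G: (a) the weight kᵢⱼ(t) is nondecreasing in t; (b) kᵢⱼ(t) is bounded above; and (c) kᵢⱼ(t) converges as t → ∞, with lim_{t→∞} kᵢⱼ(t) = kᵢⱼ(0) + γᵢⱼ·∫₀^∞ |yᵢ(t) − yⱼ(t)|² dt, so the final value of each weight equals its initial value plus γᵢⱼ times the squared L² norm of the synchronization error across that link. -/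

import Mathlib

open Matrix MeasureTheory Filter Topology

section Helpers

open Matrix

lemma hasDerivAt_dot {m : ℕ} {u w : ℝ → Fin m → ℝ} {u' w' : Fin m → ℝ} {t : ℝ}
    (hu : HasDerivAt u u' t) (hw : HasDerivAt w w' t) :
    HasDerivAt (fun s => u s ⬝ᵥ w s) (u' ⬝ᵥ w t + u t ⬝ᵥ w') t := by
  have h1 : ∀ i : Fin m, HasDerivAt (fun s => u s i * w s i)
      (u' i * w t i + u t i * w' i) t :=
    fun i => ((hasDerivAt_pi.1 hu i).mul (hasDerivAt_pi.1 hw i))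
  have := HasDerivAt.fun_sum (u := Finset.univ) (fun i _ => h1 i)
  simpa [dotProduct, Finset.sum_add_distrib] using this

lemma hasDerivAt_mulVec {m l : ℕ} (M : Matrix (Fin l) (Fin m) ℝ) {u : ℝ → Fin m → ℝ}
    {u' : Fin m → ℝ} {t : ℝ} (hu : HasDerivAt u u' t) :
    HasDerivAt (fun s => M *ᵥ u s) (M *ᵥ u') t := by
  rw [hasDerivAt_pi]
  intro i
  have h1 : ∀ j : Fin m, HasDerivAt (fun s => M i j * u s j) (M i j * u' j) t :=
    fun j => (hasDerivAt_pi.1 hu j).const_mul _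
  have := HasDerivAt.fun_sum (u := Finset.univ) (fun j _ => h1 j)
  simpa [mulVec, dotProduct] using this

lemma dotProduct_self_nonneg {m : ℕ} (v : Fin m → ℝ) : 0 ≤ v ⬝ᵥ v :=
  Finset.sum_nonneg fun i _ => mul_self_nonneg _

lemma dot_symm_shift {m : ℕ} {P : Matrix (Fin m) (Fin m) ℝ} (hPs : Pᵀ = P)
    (v w : Fin m → ℝ) : v ⬝ᵥ (P *ᵥ w) = (P *ᵥ v) ⬝ᵥ w := by
  rw [dotProduct_mulVec, ← vecMul_transpose, hPs]

-- mean value bound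
lemma meanvalue {n p : ℕ} {f : (Fin n → ℝ) → (Fin n → ℝ)}
    {J : (Fin n → ℝ) → Matrix (Fin n) (Fin n) ℝ}
    (hf : ∀ z, HasFDerivAt f ((J z).mulVecLin.toContinuousLinearMap) z)
    {C : Matrix (Fin p) (Fin n) ℝ}
    {X : Set (Fin n → ℝ)} (hX : Convex ℝ X)
    {θ : ℝ}
    {P : Matrix (Fin n) (Fin n) ℝ} (hPs : Pᵀ = P)
    (hLMI : ∀ z ∈ X, ∀ v : Fin n → ℝ,
      v ⬝ᵥ ((P * J z + (J z)ᵀ * P) *ᵥ v) ≤ θ * ((C *ᵥ v) ⬝ᵥ (C *ᵥ v)))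
    {a b : Fin n → ℝ} (ha : a ∈ X) (hb : b ∈ X) :
    (a - b) ⬝ᵥ (P *ᵥ (f a - f b)) ≤ θ/2 * ((C *ᵥ (a - b)) ⬝ᵥ (C *ᵥ (a - b))) := by
  set v : Fin n → ℝ := a - b with hv
  set K : ℝ := (C *ᵥ v) ⬝ᵥ (C *ᵥ v) with hK
  set g : ℝ → ℝ := fun s => v ⬝ᵥ (P *ᵥ f (b + s • v)) with hg
  have hpath : ∀ s : ℝ, HasDerivAt (fun s : ℝ => b + s • v) v s := by
    intro s
    simpa using ((hasDerivAt_id s).smul_const v).const_add b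
  have hgd : ∀ s : ℝ, HasDerivAt g (v ⬝ᵥ (P *ᵥ (J (b + s • v) *ᵥ v))) s := by
    intro s
    have hcomp : HasDerivAt (fun s : ℝ => f (b + s • v)) ((J (b + s • v)) *ᵥ v) s := by
      have := (hf (b + s • v)).comp_hasDerivAt s (hpath s)
      simpa [Function.comp_def] using this
    have := hasDerivAt_dot (hasDerivAt_const s v) (hasDerivAt_mulVec P hcomp)
    simpa using this
  have hmem : ∀ s ∈ Set.Icc (0:ℝ) 1, b + s • v ∈ X := by
    intro s hs
    have : b + s • v = (1 - s) • b + s • a := by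
      simp only [hv]; module
    rw [this]
    exact hX hb ha (by linarith [hs.1, hs.2]) hs.1 (by ring)
  have hbound : ∀ s ∈ Set.Icc (0:ℝ) 1,
      v ⬝ᵥ (P *ᵥ (J (b + s • v) *ᵥ v)) ≤ θ/2 * K := by
    intro s hs
    have hz := hmem s hs
    have h1 := hLMI _ hz v
    have h2 : v ⬝ᵥ ((P * J (b + s • v) + (J (b + s • v))ᵀ * P) *ᵥ v)
        = 2 * (v ⬝ᵥ (P *ᵥ (J (b + s • v) *ᵥ v))) := by
      rw [add_mulVec, dotProduct_add, ← mulVec_mulVec, ← mulVec_mulVec,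
        dot_symm_shift hPs v, dotProduct_mulVec v ((J _)ᵀ), vecMul_transpose,
        dotProduct_comm (J _ *ᵥ v)]
      ring
    linarith
  -- monotonicity of s ↦ θ/2*K*s - g s on [0,1]
  have key : g 1 - g 0 ≤ θ/2 * K := by
    have hmono : MonotoneOn (fun s => θ/2 * K * s - g s) (Set.Icc (0:ℝ) 1) := by
      apply monotoneOn_of_deriv_nonneg (convex_Icc 0 1)
      · exact (Continuous.continuousOn (by continuity)).sub
          (fun s _ => ((hgd s).continuousAt.continuousWithinAt))
      · intro s _
        exact ((hasDerivAt_const s _ |>.mul (hasDerivAt_id s)).sub (hgd s)).differentiableAt.differentiableWithinAt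
      · intro s hs
        rw [interior_Icc] at hs
        have hd : HasDerivAt (fun s => θ/2 * K * s - g s)
            (θ/2 * K - v ⬝ᵥ (P *ᵥ (J (b + s • v) *ᵥ v))) s := by
          simpa using (((hasDerivAt_id s).const_mul (θ/2*K)).fun_sub (hgd s))
        rw [hd.deriv]
        have := hbound s ⟨le_of_lt hs.1, le_of_lt hs.2⟩
        linarith
    have h01 := hmono ⟨le_refl 0, zero_le_one⟩ ⟨zero_le_one, le_refl 1⟩ zero_le_one
    simp only at h01
    linarith
  have : g 1 - g 0 = v ⬝ᵥ (P *ᵥ (f a - f b)) := by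
    simp only [hg, one_smul, zero_smul, add_zero]
    rw [mulVec_sub, dotProduct_sub]
    congr 2
    · congr 1; simp [hv]
  linarith [key]

lemma dsq_add_le {m : ℕ} (a b : Fin m → ℝ) :
    (a + b) ⬝ᵥ (a + b) ≤ 2 * (a ⬝ᵥ a) + 2 * (b ⬝ᵥ b) := by
  have h := dotProduct_self_nonneg (a - b)
  rw [dotProduct_sub, sub_dotProduct, sub_dotProduct, dotProduct_comm b a] at h
  rw [dotProduct_add, add_dotProduct, add_dotProduct, dotProduct_comm b a]
  linarith

lemma if_dsq_nonneg {m : ℕ} (c : Prop) [Decidable c] (v : Fin m → ℝ) :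
    0 ≤ if c then v ⬝ᵥ v else 0 := by
  split
  · exact dotProduct_self_nonneg v
  · exact le_refl 0

lemma edge_le_S {p N : ℕ} (G : SimpleGraph (Fin N)) [DecidableRel G.Adj]
    (y : Fin N → Fin p → ℝ) {i j : Fin N} (hij : G.Adj i j) :
    (y i - y j) ⬝ᵥ (y i - y j) ≤
      ∑ a : Fin N, ∑ b : Fin N, (if G.Adj a b then (y a - y b) ⬝ᵥ (y a - y b) else 0) := by
  have hnn : ∀ a : Fin N, 0 ≤ ∑ b : Fin N, (if G.Adj a b then (y a - y b) ⬝ᵥ (y a - y b) else 0) := by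
    intro a
    exact Finset.sum_nonneg fun b _ => if_dsq_nonneg _ _
  calc (y i - y j) ⬝ᵥ (y i - y j)
      ≤ ∑ b : Fin N, (if G.Adj i b then (y i - y b) ⬝ᵥ (y i - y b) else 0) := by
        have := Finset.single_le_sum (f := fun b => (if G.Adj i b then (y i - y b) ⬝ᵥ (y i - y b) else 0))
          (fun b _ => if_dsq_nonneg _ _) (Finset.mem_univ j)
        simpa [hij] using this
    _ ≤ _ := Finset.single_le_sum (f := fun a => ∑ b : Fin N, (if G.Adj a b then (y a - y b) ⬝ᵥ (y a - y b) else 0))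
          (fun a _ => hnn a) (Finset.mem_univ i)

lemma S_nonneg {p N : ℕ} (G : SimpleGraph (Fin N)) [DecidableRel G.Adj]
    (y : Fin N → Fin p → ℝ) :
    0 ≤ ∑ a : Fin N, ∑ b : Fin N, (if G.Adj a b then (y a - y b) ⬝ᵥ (y a - y b) else 0) :=
  Finset.sum_nonneg fun a _ => Finset.sum_nonneg fun b _ => if_dsq_nonneg _ _

lemma pair_le_S {p N : ℕ} (G : SimpleGraph (Fin N)) [DecidableRel G.Adj] (hG : G.Connected)
    (y : Fin N → Fin p → ℝ) (i j : Fin N) :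
    (y i - y j) ⬝ᵥ (y i - y j) ≤
      4 ^ N * ∑ a : Fin N, ∑ b : Fin N, (if G.Adj a b then (y a - y b) ⬝ᵥ (y a - y b) else 0) := by
  set S := ∑ a : Fin N, ∑ b : Fin N, (if G.Adj a b then (y a - y b) ⬝ᵥ (y a - y b) else 0) with hS
  have hSnn : 0 ≤ S := S_nonneg G y
  have key : ∀ (i j : Fin N) (w : G.Walk i j),
      (y i - y j) ⬝ᵥ (y i - y j) ≤ 4 ^ w.length * S := by
    intro i j w
    induction w with
    | nil => simp [dotProduct_self_nonneg, hSnn]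
    | @cons i b j h w ih =>
      have h1 : (y i - y b) ⬝ᵥ (y i - y b) ≤ S := edge_le_S G y h
      have h2 : y i - y j = (y i - y b) + (y b - y j) := by abel
      have h3 := dsq_add_le (y i - y b) (y b - y j)
      have h4 : (1:ℝ) ≤ 4 ^ w.length := one_le_pow₀ (by norm_num)
      calc (y i - y j) ⬝ᵥ (y i - y j)
          ≤ 2 * ((y i - y b) ⬝ᵥ (y i - y b)) + 2 * ((y b - y j) ⬝ᵥ (y b - y j)) := by
            rw [h2]; exact h3
        _ ≤ 2 * S + 2 * (4 ^ w.length * S) := by nlinarith [ih]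
        _ ≤ 4 ^ (w.cons h).length * S := by
            simp only [SimpleGraph.Walk.length_cons, pow_succ]
            nlinarith [mul_le_mul_of_nonneg_right h4 hSnn]
  obtain ⟨w⟩ := (hG i j)
  have hp := w.toPath
  have hlen : (hp : G.Walk i j).length < N := by
    simpa using hp.2.length_lt
  calc (y i - y j) ⬝ᵥ (y i - y j) ≤ 4 ^ (hp : G.Walk i j).length * S := key i j hp
    _ ≤ 4 ^ N * S := by
        apply mul_le_mul_of_nonneg_right _ hSnn
        exact pow_le_pow_right₀ (by norm_num) (le_of_lt hlen)

lemma dotProduct_finsum {m : ℕ} {ι : Type*} (s : Finset ι) (v : Fin m → ℝ) (w : ι → Fin m → ℝ) :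
    v ⬝ᵥ (∑ l ∈ s, w l) = ∑ l ∈ s, v ⬝ᵥ w l := by
  simp only [dotProduct, Finset.sum_apply, Finset.mul_sum]
  exact Finset.sum_comm

lemma finsum_dotProduct {m : ℕ} {ι : Type*} (s : Finset ι) (v : Fin m → ℝ) (w : ι → Fin m → ℝ) :
    (∑ l ∈ s, w l) ⬝ᵥ v = ∑ l ∈ s, w l ⬝ᵥ v := by
  rw [dotProduct_comm, dotProduct_finsum]
  simp [dotProduct_comm]

lemma sum_u_zero {p N : ℕ} (y : Fin N → Fin p → ℝ) (κ : Fin N → Fin N → ℝ)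
    (hsym : ∀ i j, κ i j = κ j i) :
    ∑ i : Fin N, ∑ l : Fin N, κ i l • (y l - y i) = (0 : Fin p → ℝ) := by
  set S := ∑ i : Fin N, ∑ l : Fin N, κ i l • (y l - y i) with hS
  have hswap : S = ∑ i : Fin N, ∑ l : Fin N, κ l i • (y i - y l) := by
    rw [hS]; exact Finset.sum_comm
  have hneg : S = -S := by
    nth_rewrite 1 [hswap]
    rw [← Finset.sum_neg_distrib]
    apply Finset.sum_congr rfl; intro i _
    rw [← Finset.sum_neg_distrib]
    apply Finset.sum_congr rfl; intro l _
    rw [hsym l i]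
    ext c; simp; ring
  have h2 : S + S = 0 := by nth_rewrite 1 [hneg]; simp
  have h3 : (2:ℝ) • S = 0 := by rw [two_smul]; exact h2
  have := smul_eq_zero.mp h3
  simpa using this

lemma coupling_identity {p N : ℕ} (y : Fin N → Fin p → ℝ) (κ : Fin N → Fin N → ℝ)
    (hsym : ∀ i j, κ i j = κ j i) :
    ∑ i : Fin N, ∑ j : Fin N,
        ((y i - y j) ⬝ᵥ ((∑ l, κ i l • (y l - y i)) - (∑ l, κ j l • (y l - y j))))
      = -(N:ℝ) * ∑ i : Fin N, ∑ j : Fin N, κ i j * ((y i - y j) ⬝ᵥ (y i - y j)) := by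
  set u : Fin N → Fin p → ℝ := fun i => ∑ l, κ i l • (y l - y i) with hu
  -- step 1 : cross term with u j equals minus the one with u i
  have step1 : ∑ i : Fin N, ∑ j : Fin N, ((y i - y j) ⬝ᵥ u j)
      = - ∑ i : Fin N, ∑ j : Fin N, ((y i - y j) ⬝ᵥ u i) := by
    rw [← Finset.sum_neg_distrib]
    rw [Finset.sum_comm]
    apply Finset.sum_congr rfl; intro i _
    rw [← Finset.sum_neg_distrib]
    apply Finset.sum_congr rfl; intro j _
    rw [show y j - y i = -(y i - y j) by abel, neg_dotProduct]
  have expand : ∑ i : Fin N, ∑ j : Fin N,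
      ((y i - y j) ⬝ᵥ ((u i) - (u j)))
      = 2 * ∑ i : Fin N, ∑ j : Fin N, ((y i - y j) ⬝ᵥ u i) := by
    simp only [dotProduct_sub]
    rw [Finset.sum_congr rfl (fun i _ => Finset.sum_sub_distrib _ _),
      Finset.sum_sub_distrib, step1]
    ring
  -- step 2 : ∑ j (y i - y j) = N • y i - T
  have step2 : ∑ i : Fin N, ∑ j : Fin N, ((y i - y j) ⬝ᵥ u i)
      = (N:ℝ) * ∑ i : Fin N, (y i ⬝ᵥ u i) := by
    have husum : ∑ i : Fin N, u i = 0 := sum_u_zero y κ hsym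
    calc ∑ i : Fin N, ∑ j : Fin N, ((y i - y j) ⬝ᵥ u i)
        = ∑ i : Fin N, ((∑ j : Fin N, (y i - y j)) ⬝ᵥ u i) := by
          exact Finset.sum_congr rfl fun i _ => (finsum_dotProduct _ _ _).symm
      _ = ∑ i : Fin N, (((N:ℝ) • y i) ⬝ᵥ u i) - ∑ i : Fin N, ((∑ j, y j) ⬝ᵥ u i) := by
          rw [← Finset.sum_sub_distrib]
          apply Finset.sum_congr rfl; intro i _
          rw [← sub_dotProduct]
          congr 1
          rw [Finset.sum_sub_distrib]
          congr 1
          simp [Finset.sum_const, Finset.card_univ, ← Nat.cast_smul_eq_nsmul ℝ]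
      _ = (N:ℝ) * ∑ i : Fin N, (y i ⬝ᵥ u i) := by
          rw [← dotProduct_finsum Finset.univ (∑ j, y j) u] at *
          rw [husum]
          simp [smul_dotProduct, Finset.mul_sum]
  -- step 3 : the quadratic identity
  have step3 : 2 * ∑ i : Fin N, (y i ⬝ᵥ u i)
      = - ∑ i : Fin N, ∑ j : Fin N, κ i j * ((y i - y j) ⬝ᵥ (y i - y j)) := by
    have lhs1 : ∑ i : Fin N, (y i ⬝ᵥ u i)
        = ∑ i : Fin N, ∑ l : Fin N, κ i l * (y i ⬝ᵥ y l - y i ⬝ᵥ y i) := by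
      apply Finset.sum_congr rfl; intro i _
      rw [hu, dotProduct_finsum]
      apply Finset.sum_congr rfl; intro l _
      rw [dotProduct_smul, smul_eq_mul, dotProduct_sub]
    have lhs2 : ∑ i : Fin N, (y i ⬝ᵥ u i)
        = ∑ i : Fin N, ∑ l : Fin N, κ i l * (y l ⬝ᵥ y i - y l ⬝ᵥ y l) := by
      rw [lhs1, Finset.sum_comm]
      apply Finset.sum_congr rfl; intro i _
      apply Finset.sum_congr rfl; intro l _
      rw [hsym]
    have comb : 2 * ∑ i : Fin N, (y i ⬝ᵥ u i)
        = ∑ i : Fin N, ∑ l : Fin N,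
            (κ i l * (y i ⬝ᵥ y l - y i ⬝ᵥ y i) + κ i l * (y l ⬝ᵥ y i - y l ⬝ᵥ y l)) := by
      rw [two_mul]
      nth_rewrite 1 [lhs1]
      nth_rewrite 1 [lhs2]
      rw [← Finset.sum_add_distrib]
      exact Finset.sum_congr rfl fun i _ => (Finset.sum_add_distrib).symm
    rw [comb, ← Finset.sum_neg_distrib]
    apply Finset.sum_congr rfl; intro i _
    rw [← Finset.sum_neg_distrib]
    apply Finset.sum_congr rfl; intro l _
    simp only [dotProduct_sub, sub_dotProduct, dotProduct_comm (y l) (y i)]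
    ring
  rw [expand, step2]
  rw [show (2:ℝ) * ((N:ℝ) * ∑ i : Fin N, (y i ⬝ᵥ u i)) = (N:ℝ) * (2 * ∑ i : Fin N, (y i ⬝ᵥ u i)) by ring, step3]
  ring


end Helpers

/-- Behavior of the adaptive weights: for the adaptively coupled system
under Assumption (OFP) with states remaining in `X`, each weight `kᵢⱼ` on an edge of `G` is
(a) nondecreasing on `[0,∞)`, (b) bounded above, and (c) convergent, with limit
`kᵢⱼ(0) + γᵢⱼ ∫₀^∞ |yᵢ(t) - yⱼ(t)|² dt`. -/
theorem adaptive_weights_monotone_bounded_convergent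
    {n p N : ℕ}
    (G : SimpleGraph (Fin N)) (hG : G.Connected)
    (f : (Fin n → ℝ) → (Fin n → ℝ))
    (J : (Fin n → ℝ) → Matrix (Fin n) (Fin n) ℝ)
    (hf : ∀ z, HasFDerivAt f ((J z).mulVecLin.toContinuousLinearMap) z)
    (hJcont : Continuous J)
    (B : Matrix (Fin n) (Fin p) ℝ) (C : Matrix (Fin p) (Fin n) ℝ)
    -- Assumption (OFP)
    (X : Set (Fin n → ℝ)) (hX : Convex ℝ X)
    (θ : ℝ) (hθ : 0 < θ)
    (P : Matrix (Fin n) (Fin n) ℝ) (hP : P.PosDef)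
    (hLMI : ∀ z ∈ X, ∀ v : Fin n → ℝ,
      v ⬝ᵥ ((P * J z + (J z)ᵀ * P) *ᵥ v) ≤ θ * ((C *ᵥ v) ⬝ᵥ (C *ᵥ v)))
    (hPB : P * B = Cᵀ)
    -- a continuously differentiable solution of the adaptively coupled system on `[0,∞)`
    (x : Fin N → ℝ → (Fin n → ℝ)) (k : Fin N → Fin N → ℝ → ℝ)
    (γ : Fin N → Fin N → ℝ)
    (hγsym : ∀ i j, γ i j = γ j i)
    (hγpos : ∀ i j, G.Adj i j → 0 < γ i j)
    (hksym : ∀ i j t, k i j t = k j i t)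
    (hknonadj : ∀ i j, ¬ G.Adj i j → ∀ t, k i j t = 0)
    (hxode : ∀ i, ∀ t, 0 ≤ t →
      HasDerivAt (x i)
        (f (x i t) + B *ᵥ (∑ j, k i j t • (C *ᵥ x j t - C *ᵥ x i t))) t)
    (hkode : ∀ i j, G.Adj i j → ∀ t, 0 ≤ t →
      HasDerivAt (k i j)
        (γ i j * ((C *ᵥ x i t - C *ᵥ x j t) ⬝ᵥ (C *ᵥ x i t - C *ᵥ x j t))) t)
    (hXinv : ∀ i, ∀ t, 0 ≤ t → x i t ∈ X) :
    ∀ i j, G.Adj i j →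
      -- (a) nondecreasing on `[0,∞)`
      (∀ s t : ℝ, 0 ≤ s → s ≤ t → k i j s ≤ k i j t) ∧
      -- (b) bounded above
      (∃ M : ℝ, ∀ t : ℝ, 0 ≤ t → k i j t ≤ M) ∧
      -- (c) convergent, with limit `kᵢⱼ(0) + γᵢⱼ ∫₀^∞ |yᵢ - yⱼ|² dt`
      Tendsto (k i j) atTop
        (𝓝 (k i j 0 + γ i j * ∫ t in Set.Ioi (0 : ℝ),
          ((C *ᵥ x i t - C *ᵥ x j t) ⬝ᵥ (C *ᵥ x i t - C *ᵥ x j t)))) := by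
  classical
  have hNpos : 0 < N := by
    rcases hG.nonempty with ⟨v⟩
    exact v.pos
  have hPs : Pᵀ = P := by simpa using hP.isHermitian.eq
  have hPnn : ∀ v : Fin n → ℝ, 0 ≤ v ⬝ᵥ (P *ᵥ v) := fun v => by
    simpa using hP.posSemidef.re_dotProduct_nonneg v
  set Nr : ℝ := (N : ℝ) with hNrdef
  have hNrpos : (0:ℝ) < Nr := by
    rw [hNrdef]
    exact_mod_cast hNpos
  set a0 : ℝ := θ * (Nr^2 * 4^N) / (2*Nr) with ha0def
  -- (a) monotonicity, for every adjacent pair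
  have hmonk : ∀ a b : Fin N, G.Adj a b → ∀ s t : ℝ, 0 ≤ s → s ≤ t → k a b s ≤ k a b t := by
    intro a b hab
    have hmono : MonotoneOn (k a b) (Set.Ici 0) := by
      apply monotoneOn_of_deriv_nonneg (convex_Ici 0)
      · intro t ht
        exact (hkode a b hab t ht).continuousAt.continuousWithinAt
      · intro t ht
        rw [interior_Ici] at ht
        exact (hkode a b hab t ht.le).differentiableAt.differentiableWithinAt
      · intro t ht
        rw [interior_Ici] at ht
        rw [(hkode a b hab t ht.le).deriv]
        have := dotProduct_self_nonneg (C *ᵥ x a t - C *ᵥ x b t)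
        have := (hγpos a b hab).le
        positivity
    intro s t hs hst
    exact hmono hs (hs.trans hst) hst
  -- the Lyapunov function and its derivative
  set V : ℝ → ℝ := fun t =>
    (∑ a : Fin N, ∑ b : Fin N, (x a t - x b t) ⬝ᵥ (P *ᵥ (x a t - x b t))) +
    ∑ a : Fin N, ∑ b : Fin N,
      (if G.Adj a b then (Nr/γ a b) * (k a b t - a0)^2 else 0) with hVdef
  set V' : ℝ → ℝ := fun t =>
    (∑ a : Fin N, ∑ b : Fin N, 2 * ((x a t - x b t) ⬝ᵥ (P *ᵥ
      ((f (x a t) + B *ᵥ (∑ l, k a l t • (C *ᵥ x l t - C *ᵥ x a t))) -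
       (f (x b t) + B *ᵥ (∑ l, k b l t • (C *ᵥ x l t - C *ᵥ x b t))))))) +
    ∑ a : Fin N, ∑ b : Fin N,
      (if G.Adj a b then (Nr/γ a b) * (2 * (k a b t - a0) *
        (γ a b * ((C *ᵥ x a t - C *ᵥ x b t) ⬝ᵥ (C *ᵥ x a t - C *ᵥ x b t)))) else 0)
    with hV'def
  have hVd : ∀ t : ℝ, 0 ≤ t → HasDerivAt V (V' t) t := by
    intro t ht
    rw [hVdef, hV'def]
    apply HasDerivAt.add
    · apply HasDerivAt.fun_sum
      intro a _
      apply HasDerivAt.fun_sum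
      intro b _
      have hd : HasDerivAt (fun s => x a s - x b s)
          ((f (x a t) + B *ᵥ (∑ l, k a l t • (C *ᵥ x l t - C *ᵥ x a t))) -
           (f (x b t) + B *ᵥ (∑ l, k b l t • (C *ᵥ x l t - C *ᵥ x b t)))) t :=
        (hxode a t ht).sub (hxode b t ht)
      have h1 := hasDerivAt_dot hd (hasDerivAt_mulVec P hd)
      refine h1.congr_deriv ?_
      rw [dot_symm_shift hPs, dotProduct_comm]
      ring
    · apply HasDerivAt.fun_sum
      intro a _
      apply HasDerivAt.fun_sum
      intro b _
      by_cases hab : G.Adj a b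
      · simp only [hab, if_true]
        have h2 := ((hkode a b hab t ht).sub_const a0).pow 2
        have h3 := h2.const_mul (Nr/γ a b)
        refine h3.congr_deriv ?_
        push_cast
        ring
      · simp only [hab, if_false]
        exact hasDerivAt_const t 0
  -- the derivative is nonpositive
  have hV'le : ∀ t : ℝ, 0 ≤ t → V' t ≤ 0 := by
    intro t ht
    rw [hV'def]
    dsimp only
    set S : ℝ := ∑ a : Fin N, ∑ b : Fin N,
      (if G.Adj a b then ((fun i => C *ᵥ x i t) a - (fun i => C *ᵥ x i t) b) ⬝ᵥ
        ((fun i => C *ᵥ x i t) a - (fun i => C *ᵥ x i t) b) else 0) with hSdef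
    have hSnn : 0 ≤ S := S_nonneg G (fun i => C *ᵥ x i t)
    -- split the first sum
    have hsplit : ∀ a b : Fin N,
        2 * ((x a t - x b t) ⬝ᵥ (P *ᵥ
          ((f (x a t) + B *ᵥ (∑ l, k a l t • (C *ᵥ x l t - C *ᵥ x a t))) -
           (f (x b t) + B *ᵥ (∑ l, k b l t • (C *ᵥ x l t - C *ᵥ x b t))))))
        = 2 * ((x a t - x b t) ⬝ᵥ (P *ᵥ (f (x a t) - f (x b t)))) +
          2 * ((C *ᵥ x a t - C *ᵥ x b t) ⬝ᵥ
            ((∑ l, k a l t • (C *ᵥ x l t - C *ᵥ x a t)) -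
             (∑ l, k b l t • (C *ᵥ x l t - C *ᵥ x b t)))) := by
      intro a b
      have hre : (f (x a t) + B *ᵥ (∑ l, k a l t • (C *ᵥ x l t - C *ᵥ x a t))) -
           (f (x b t) + B *ᵥ (∑ l, k b l t • (C *ᵥ x l t - C *ᵥ x b t)))
          = (f (x a t) - f (x b t)) +
            B *ᵥ ((∑ l, k a l t • (C *ᵥ x l t - C *ᵥ x a t)) -
                  (∑ l, k b l t • (C *ᵥ x l t - C *ᵥ x b t))) := by
        rw [mulVec_sub]; abel
      rw [hre, mulVec_add, dotProduct_add, mulVec_mulVec, hPB,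
        dotProduct_mulVec _ Cᵀ, vecMul_transpose]
      simp only [mulVec_sub]
      ring
    rw [Finset.sum_congr rfl (fun a _ => Finset.sum_congr rfl (fun b _ => hsplit a b))]
    rw [Finset.sum_congr rfl (fun a _ => Finset.sum_add_distrib), Finset.sum_add_distrib]
    -- coupling term
    have hcoup : ∑ a : Fin N, ∑ b : Fin N,
        ((C *ᵥ x a t - C *ᵥ x b t) ⬝ᵥ
          ((∑ l, k a l t • (C *ᵥ x l t - C *ᵥ x a t)) -
           (∑ l, k b l t • (C *ᵥ x l t - C *ᵥ x b t))))
        = -(N:ℝ) * ∑ a : Fin N, ∑ b : Fin N, k a b t *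
            ((C *ᵥ x a t - C *ᵥ x b t) ⬝ᵥ (C *ᵥ x a t - C *ᵥ x b t)) := by
      have h := coupling_identity (fun i => C *ᵥ x i t) (fun a b => k a b t)
        (fun a b => hksym a b t)
      simpa using h
    have hcoup2 : ∑ a : Fin N, ∑ b : Fin N,
        2 * ((C *ᵥ x a t - C *ᵥ x b t) ⬝ᵥ
          ((∑ l, k a l t • (C *ᵥ x l t - C *ᵥ x a t)) -
           (∑ l, k b l t • (C *ᵥ x l t - C *ᵥ x b t))))
        = -(2*Nr) * ∑ a : Fin N, ∑ b : Fin N, k a b t *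
            ((C *ᵥ x a t - C *ᵥ x b t) ⬝ᵥ (C *ᵥ x a t - C *ᵥ x b t)) := by
      simp only [← Finset.mul_sum]
      rw [hcoup, hNrdef]
      ring
    rw [hcoup2]
    -- mean value bound on the f-term
    have hmv : ∑ a : Fin N, ∑ b : Fin N,
        2 * ((x a t - x b t) ⬝ᵥ (P *ᵥ (f (x a t) - f (x b t))))
        ≤ 2 * Nr * a0 * S := by
      have hterm : ∀ a b : Fin N,
          2 * ((x a t - x b t) ⬝ᵥ (P *ᵥ (f (x a t) - f (x b t))))
          ≤ θ * (4^N * S) := by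
        intro a b
        have h1 := meanvalue hf hX hPs hLMI (hXinv a t ht) (hXinv b t ht)
        have h2 : ((C *ᵥ (x a t - x b t)) ⬝ᵥ (C *ᵥ (x a t - x b t))) ≤ 4^N * S := by
          have := pair_le_S G hG (fun i => C *ᵥ x i t) a b
          rw [← hSdef] at this
          simpa [mulVec_sub] using this
        nlinarith [h1, h2, hθ]
      calc ∑ a : Fin N, ∑ b : Fin N,
            2 * ((x a t - x b t) ⬝ᵥ (P *ᵥ (f (x a t) - f (x b t))))
          ≤ ∑ a : Fin N, ∑ b : Fin N, θ * (4^N * S) :=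
            Finset.sum_le_sum (fun a _ => Finset.sum_le_sum (fun b _ => hterm a b))
        _ = Nr^2 * (θ * (4^N * S)) := by
            simp [Finset.sum_const, Finset.card_univ]
            ring
        _ = 2 * Nr * a0 * S := by
            rw [ha0def]
            field_simp
    -- adaptive term
    have hadapt : ∑ a : Fin N, ∑ b : Fin N,
        (if G.Adj a b then (Nr/γ a b) * (2 * (k a b t - a0) *
          (γ a b * ((C *ᵥ x a t - C *ᵥ x b t) ⬝ᵥ (C *ᵥ x a t - C *ᵥ x b t)))) else 0)
        = 2 * Nr * (∑ a : Fin N, ∑ b : Fin N, k a b t *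
            ((C *ᵥ x a t - C *ᵥ x b t) ⬝ᵥ (C *ᵥ x a t - C *ᵥ x b t))) - 2 * Nr * a0 * S := by
      rw [hSdef]
      rw [Finset.mul_sum, Finset.mul_sum (a := 2*Nr*a0), ← Finset.sum_sub_distrib]
      apply Finset.sum_congr rfl; intro a _
      rw [Finset.mul_sum, Finset.mul_sum, ← Finset.sum_sub_distrib]
      apply Finset.sum_congr rfl; intro b _
      by_cases hab : G.Adj a b
      · simp only [hab, if_true]
        have hg := hγpos a b hab
        field_simp
      · simp only [hab, if_false]
        rw [hknonadj a b hab t]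
        ring
    rw [hadapt]
    linarith [hmv]
  -- V is antitone on [0,∞)
  have hVanti : AntitoneOn V (Set.Ici (0:ℝ)) := by
    apply antitoneOn_of_deriv_nonpos (convex_Ici 0)
    · intro t ht
      exact (hVd t ht).continuousAt.continuousWithinAt
    · intro t ht
      rw [interior_Ici] at ht
      exact (hVd t ht.le).differentiableAt.differentiableWithinAt
    · intro t ht
      rw [interior_Ici] at ht
      rw [(hVd t ht.le).deriv]
      exact hV'le t ht.le
  intro i j hij
  have hγij := hγpos i j hij
  -- (b) boundedness
  have hbdd : ∀ t : ℝ, 0 ≤ t → k i j t ≤ a0 + Real.sqrt (γ i j / Nr * V 0) := by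
    intro t ht
    have hVle : V t ≤ V 0 := hVanti (Set.self_mem_Ici) ht ht
    have hq : 0 ≤ ∑ a : Fin N, ∑ b : Fin N, (x a t - x b t) ⬝ᵥ (P *ᵥ (x a t - x b t)) :=
      Finset.sum_nonneg fun a _ => Finset.sum_nonneg fun b _ => hPnn _
    have hr : (Nr/γ i j) * (k i j t - a0)^2 ≤ ∑ a : Fin N, ∑ b : Fin N,
        (if G.Adj a b then (Nr/γ a b) * (k a b t - a0)^2 else 0) := by
      have hnn : ∀ a b : Fin N, 0 ≤ (if G.Adj a b then (Nr/γ a b) * (k a b t - a0)^2 else 0) := by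
        intro a b
        by_cases hab : G.Adj a b
        · simp only [hab, if_true]
          have := hγpos a b hab
          positivity
        · simp [hab]
      calc (Nr/γ i j) * (k i j t - a0)^2
          = (if G.Adj i j then (Nr/γ i j) * (k i j t - a0)^2 else 0) := by simp [hij]
        _ ≤ ∑ b : Fin N, (if G.Adj i b then (Nr/γ i b) * (k i b t - a0)^2 else 0) :=
            Finset.single_le_sum (fun b _ => hnn i b) (Finset.mem_univ j)
        _ ≤ _ := Finset.single_le_sum
            (fun a _ => Finset.sum_nonneg fun b _ => hnn a b) (Finset.mem_univ i)
    have hVt : (Nr/γ i j) * (k i j t - a0)^2 ≤ V 0 := by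
      rw [hVdef] at hVle ⊢
      dsimp only at hVle
      linarith
    have hsq : (k i j t - a0)^2 ≤ γ i j / Nr * V 0 := by
      have h6 : (k i j t - a0)^2 = (γ i j / Nr) * ((Nr/γ i j) * (k i j t - a0)^2) := by
        field_simp
      rw [h6]
      exact mul_le_mul_of_nonneg_left hVt (div_pos hγij hNrpos).le
    have habs : k i j t - a0 ≤ Real.sqrt (γ i j / Nr * V 0) := by
      calc k i j t - a0 ≤ |k i j t - a0| := le_abs_self _
        _ = Real.sqrt ((k i j t - a0)^2) := (Real.sqrt_sq_eq_abs _).symm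
        _ ≤ Real.sqrt (γ i j / Nr * V 0) := Real.sqrt_le_sqrt hsq
    linarith
  refine ⟨hmonk i j hij, ⟨a0 + Real.sqrt (γ i j / Nr * V 0), hbdd⟩, ?_⟩
  -- (c) convergence
  set kk : ℝ → ℝ := fun t => k i j (max t 0) with hkkdef
  have hkkmono : Monotone kk := by
    intro s t hst
    exact hmonk i j hij _ _ (le_max_right s 0) (max_le_max hst (le_refl 0))
  have hkkbdd : BddAbove (Set.range kk) := by
    refine ⟨a0 + Real.sqrt (γ i j / Nr * V 0), ?_⟩
    rintro v ⟨t, rfl⟩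
    exact hbdd (max t 0) (le_max_right t 0)
  have hlim : Tendsto (k i j) atTop (𝓝 (⨆ t, kk t)) := by
    refine (tendsto_atTop_ciSup hkkmono hkkbdd).congr' ?_
    filter_upwards [eventually_ge_atTop (0:ℝ)] with t ht
    rw [hkkdef]
    simp [max_eq_left ht]
  have hint := integral_Ioi_of_hasDerivAt_of_nonneg (g := k i j)
      (g' := fun t => γ i j * ((C *ᵥ x i t - C *ᵥ x j t) ⬝ᵥ (C *ᵥ x i t - C *ᵥ x j t)))
      (a := 0) (l := ⨆ t, kk t)
      (hkode i j hij 0 le_rfl).continuousAt.continuousWithinAt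
      (fun t htp => hkode i j hij t (le_of_lt htp))
      (fun t _ => by
        have := dotProduct_self_nonneg (C *ᵥ x i t - C *ᵥ x j t)
        positivity)
      hlim
  rw [MeasureTheory.integral_const_mul] at hint
  have hfin : k i j 0 + γ i j * ∫ t in Set.Ioi (0:ℝ),
      ((C *ᵥ x i t - C *ᵥ x j t) ⬝ᵥ (C *ᵥ x i t - C *ᵥ x j t)) = ⨆ t, kk t := by
    linarith [hint]
  rw [hfin]
  exact hlim
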